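/- If G is a graph with at least two vertices such that no induced subgraph of G is isomorphic to the three-edge path P4, then either G is disconnected or the complement of G is disconnected. -/

import Mathlib

open SimpleGraph

section SeinscheAux

variable {V : Type*}

/-- adjacency in `G` avoiding the vertex `v` -/
def PRel (G : SimpleGraph V) (v : V) (a b : V) : Prop :=
  G.Adj a b ∧ a ≠ v ∧ b ≠ v

/-- reachability in `G` avoiding the vertex `v` -/
def PRT (G : SimpleGraph V) (v : V) : V → V → Prop :=
  Relation.ReflTransGen (PRel G v)

lemma prt_symm {G : SimpleGraph V} {v a b : V} (h : PRT G v a b) : PRT G v b a :=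
  haveI : Std.Symm (PRel G v) := ⟨fun _ _ h => ⟨h.1.symm, h.2.2, h.2.1⟩⟩
  (Relation.ReflTransGen.stdSymm (r := PRel G v)).symm _ _ h

lemma walk_prt {G : SimpleGraph V} {v : V} : ∀ {x y : V} (p : G.Walk x y),
    v ∉ p.support → PRT G v x y := by
  intro x y p
  induction p with
  | nil => intro _; exact Relation.ReflTransGen.refl
  | cons h q ih =>
    intro hv
    rw [SimpleGraph.Walk.support_cons, List.mem_cons] at hv
    push_neg at hv
    exact Relation.ReflTransGen.head
      ⟨h, fun e => hv.1 e.symm, fun e => hv.2 (e ▸ q.start_mem_support)⟩ (ih hv.2)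

/-- each `v`-avoiding component reachable from `u ≠ v` contains a neighbor of `v` -/
lemma exists_nbr {G : SimpleGraph V} (hG : G.Connected) (v u : V) (hu : u ≠ v) :
    ∃ w, G.Adj v w ∧ PRT G v w u := by
  classical
  obtain ⟨p⟩ := hG v u
  obtain ⟨q, hq⟩ : ∃ q : G.Walk v u, q.IsPath := ⟨p.toPath, p.toPath.2⟩
  cases q with
  | nil => exact absurd rfl hu
  | cons h q =>
    rw [SimpleGraph.Walk.cons_isPath_iff] at hq
    exact ⟨_, h, walk_prt q hq.2⟩

lemma switch {G : SimpleGraph V} {v u w : V} (hrt : PRT G v w u) :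
    G.Adj v w → ¬ G.Adj v u → ∃ x y, G.Adj v x ∧ G.Adj x y ∧ ¬ G.Adj v y ∧ y ≠ v := by
  induction hrt using Relation.ReflTransGen.head_induction_on with
  | refl => intro hw hu; exact absurd hw hu
  | head hstep _ ihstep =>
    intro hw hu
    rename_i c _
    by_cases hc : G.Adj v c
    · exact ihstep hc hu
    · exact ⟨_, _, hw, hstep.1, hc, hstep.2.2⟩

lemma key {G : SimpleGraph V} (hfree : IsEmpty (pathGraph 4 ↪g G))
    (hG : G.Connected) (v : V)
    (hv : ∃ u, u ≠ v ∧ ¬ G.Adj v u)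
    {a b : V} (ha : a ≠ v) (hb : b ≠ v) (hab : ¬ PRT G v a b) : False := by
  obtain ⟨u, hu, hvu⟩ := hv
  obtain ⟨w0, hw0, hrt0⟩ := exists_nbr hG v u hu
  obtain ⟨w, x, hvw, hwx, hvx, hx⟩ := switch hrt0 hw0 hvu
  have hc : ∃ c, c ≠ v ∧ ¬ PRT G v w c := by
    by_cases h : PRT G v w a
    · exact ⟨b, hb, fun h' => hab ((prt_symm h).trans h')⟩
    · exact ⟨a, ha, h⟩
  obtain ⟨c, hcv, hwc⟩ := hc
  obtain ⟨y, hvy, hyc⟩ := exists_nbr hG v c hcv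
  have hwy : ¬ PRT G v w y := fun h => hwc (h.trans hyc)
  have hxy : ¬ PRT G v x y := fun h =>
    hwc ((Relation.ReflTransGen.single ⟨hwx, hvw.ne', hx⟩).trans (h.trans hyc))
  have h1 : ¬ G.Adj w y := fun h => hwy (Relation.ReflTransGen.single ⟨h, hvw.ne', hvy.ne'⟩)
  have h2 : ¬ G.Adj x y := fun h => hxy (Relation.ReflTransGen.single ⟨h, hx, hvy.ne'⟩)
  have hyw : y ≠ w := fun h => hwy (h ▸ Relation.ReflTransGen.refl)
  have hyx : y ≠ x := fun h => hxy (h ▸ Relation.ReflTransGen.refl)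
  have hxw : x ≠ w := hwx.ne'
  have hwv : w ≠ v := hvw.ne'
  have hyv : y ≠ v := hvy.ne'
  have hxv : ¬ G.Adj x v := fun h => hvx h.symm
  have h1' : ¬ G.Adj y w := fun h => h1 h.symm
  have h2' : ¬ G.Adj y x := fun h => h2 h.symm
  refine hfree.false ⟨⟨![x, w, v, y], ?_⟩, ?_⟩
  · intro i j hij
    fin_cases i <;> fin_cases j <;> simp_all
  · intro i j
    show G.Adj (![x, w, v, y] i) (![x, w, v, y] j) ↔ _
    fin_cases i <;> fin_cases j <;>
      simp [pathGraph_adj, hvw, hvw.symm, hwx, hwx.symm, hvy, hvy.symm, hvx, h1, h2,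
        hxv, h1', h2'] <;> decide


lemma prt_reachable {G : SimpleGraph V} {v a : V} (ha : a ≠ v) :
    ∀ {b : V}, PRT G v a b → ∀ hb : b ≠ v,
      (G.induce ({v}ᶜ : Set V)).Reachable ⟨a, ha⟩ ⟨b, hb⟩ := by
  intro b h
  induction h with
  | refl => intro _; rfl
  | tail _ step ih =>
    intro hc
    exact (ih step.2.1).trans (SimpleGraph.Adj.reachable (by simpa using step.1))

lemma bridge {G : SimpleGraph V} {v : V}
    (h : ¬ (G.induce ({v}ᶜ : Set V)).Connected)
    (hne : ∃ u : V, u ≠ v) :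
    ∃ a b : V, a ≠ v ∧ b ≠ v ∧ ¬ PRT G v a b := by
  by_contra hcon
  push_neg at hcon
  apply h
  rw [connected_iff]
  obtain ⟨u, hu⟩ := hne
  refine ⟨?_, ⟨⟨u, hu⟩⟩⟩
  rintro ⟨a, ha⟩ ⟨b, hb⟩
  exact prt_reachable ha (hcon a b ha hb) hb

lemma exists_nonnbr {G : SimpleGraph V} [Fintype V] (h : Gᶜ.Connected)
    (hcard : 2 ≤ Fintype.card V) (v : V) : ∃ u, u ≠ v ∧ ¬ G.Adj v u := by
  obtain ⟨u, hu⟩ := Fintype.exists_ne_of_one_lt_card (by omega) v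
  obtain ⟨p⟩ := h v u
  cases p with
  | nil => exact absurd rfl hu
  | cons hadj _ =>
    rw [SimpleGraph.compl_adj] at hadj
    exact ⟨_, fun e => hadj.1 e.symm, hadj.2⟩

lemma exists_nonnbr' {G : SimpleGraph V} [Fintype V] (h : G.Connected)
    (hcard : 2 ≤ Fintype.card V) (v : V) : ∃ u, u ≠ v ∧ ¬ Gᶜ.Adj v u := by
  obtain ⟨u, hu⟩ := Fintype.exists_ne_of_one_lt_card (by omega) v
  obtain ⟨p⟩ := h v u
  cases p with
  | nil => exact absurd rfl hu
  | cons hadj _ =>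
    exact ⟨_, hadj.ne', fun e => (SimpleGraph.compl_adj _ _ _).1 e |>.2 hadj⟩

/-- complement functor on graph embeddings -/
def Embedding.compl {W : Type*} {A : SimpleGraph V} {B : SimpleGraph W} (f : A ↪g B) :
    Aᶜ ↪g Bᶜ :=
  ⟨f.toEmbedding, by
    intro a b
    simp [SimpleGraph.compl_adj, f.map_adj_iff, f.toEmbedding.injective.ne_iff]⟩

/-- `P₄` is self-complementary -/
def p4ComplIso : pathGraph 4 ≃g (pathGraph 4)ᶜ := by
  refine ⟨⟨![2, 0, 3, 1], ![1, 3, 0, 2], by decide, by decide⟩, ?_⟩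
  intro a b
  fin_cases a <;> fin_cases b <;>
    simp [pathGraph_adj, SimpleGraph.compl_adj, Fin.ext_iff] <;> decide

lemma free_compl {G : SimpleGraph V} (hfree : IsEmpty (pathGraph 4 ↪g G)) :
    IsEmpty (pathGraph 4 ↪g Gᶜ) := by
  constructor
  intro e
  have e' : pathGraph 4 ↪g Gᶜᶜ := (Embedding.compl e).comp p4ComplIso.toEmbedding
  rw [compl_compl] at e'
  exact hfree.false e'

lemma no_reach_of_two {H : SimpleGraph V} {a b : V} (hab : a ≠ b)
    (hall : ∀ c : V, c = a ∨ c = b) (hadj : ¬ H.Adj a b) : ¬ H.Reachable a b := by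
  rintro ⟨p⟩
  cases p with
  | nil => exact hab rfl
  | cons h _ =>
    rcases hall _ with h' | h'
    · exact H.irrefl (h' ▸ h)
    · exact hadj (h' ▸ h)

lemma main_aux : ∀ (n : ℕ) (V : Type*) [Fintype V] (G : SimpleGraph V),
    Fintype.card V = n → 2 ≤ Fintype.card V → IsEmpty (pathGraph 4 ↪g G) →
    ¬ G.Connected ∨ ¬ Gᶜ.Connected := by
  intro n
  induction n using Nat.strong_induction_on with
  | _ n ih =>
    intro V _ G hn hcard hfree
    classical
    by_contra hcon
    push_neg at hcon
    obtain ⟨hG, hGc⟩ := hcon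
    by_cases h2 : Fintype.card V = 2
    · obtain ⟨a, b, hab, huniv⟩ := Nat.card_eq_two_iff.mp (by rw [Nat.card_eq_fintype_card (α := V), h2])
      have hall : ∀ c : V, c = a ∨ c = b := by
        intro c
        have : c ∈ ({a, b} : Set V) := huniv ▸ Set.mem_univ c
        simpa using this
      by_cases hadj : G.Adj a b
      · exact no_reach_of_two hab hall
          (fun h => ((SimpleGraph.compl_adj _ _ _).1 h).2 hadj) (hGc a b)
      · exact no_reach_of_two hab hall hadj (hG a b)
    · have h3 : 3 ≤ Fintype.card V := by omega
      obtain ⟨v⟩ : Nonempty V := Fintype.card_pos_iff.mp (by omega)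
      have hne : ∃ u : V, u ≠ v := Fintype.exists_ne_of_one_lt_card (by omega) v
      have hcard' : Fintype.card ({v}ᶜ : Set V) = n - 1 := by
        rw [Fintype.card_compl_set]
        simp [hn]
      have hfree' : IsEmpty (pathGraph 4 ↪g G.induce ({v}ᶜ : Set V)) :=
        ⟨fun e => hfree.false ((SimpleGraph.Embedding.induce _).comp e)⟩
      have := ih (n - 1) (by omega) ({v}ᶜ : Set V) (G.induce _) hcard'
        (by rw [hcard']; omega) hfree'
      rcases this with h | h
      · obtain ⟨a, b, ha, hb, hab⟩ := bridge h hne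
        exact key hfree hG v (exists_nonnbr hGc hcard v) ha hb hab
      · have hce : (G.induce ({v}ᶜ : Set V))ᶜ = Gᶜ.induce ({v}ᶜ : Set V) := by
          ext x y
          simp [SimpleGraph.compl_adj, Subtype.ext_iff]
        rw [hce] at h
        obtain ⟨a, b, ha, hb, hab⟩ := bridge h hne
        exact key (free_compl hfree) hGc v (exists_nonnbr' hG hcard v) ha hb hab

end SeinscheAux

/-- Seinsche's theorem: a `P₄`-free graph on at least two vertices is
disconnected or has disconnected complement. -/
theorem p4_free_disconnected_or_complement_disconnected {V : Type*} [Fintype V]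
    (G : SimpleGraph V) (hcard : 2 ≤ Fintype.card V)
    (hfree : IsEmpty (pathGraph 4 ↪g G)) :
    ¬ G.Connected ∨ ¬ Gᶜ.Connected :=
  main_aux (Fintype.card V) V G rfl hcard hfree
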